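/- For every nonnegative integer n, the map (x,y) ↦ (−2x − y − 1, x − 2y − 1) is a bijection from the set of integer pairs (x,y) with 5x² + 5y² + 2x + 4y = n onto the set of integer pairs with 5x² + 5y² + 2x + 4y = 5n + 4. -/
import Mathlib


/-- For every `n ∈ ℕ`, the map `(x, y) ↦ (-2x - y - 1, x - 2y - 1)`
is a bijection from the integer pairs with `5x² + 5y² + 2x + 4y = n` onto the
integer pairs with `5x² + 5y² + 2x + 4y = 5n + 4`. -/
theorem selfconjugate_5cores_n_5n4 (n : ℕ) :
    Set.BijOn (fun p : ℤ × ℤ => (-2 * p.1 - p.2 - 1, p.1 - 2 * p.2 - 1))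
      {p : ℤ × ℤ | 5 * p.1 ^ 2 + 5 * p.2 ^ 2 + 2 * p.1 + 4 * p.2 = n}
      {p : ℤ × ℤ | 5 * p.1 ^ 2 + 5 * p.2 ^ 2 + 2 * p.1 + 4 * p.2 = 5 * n + 4} := by
  refine ⟨?_, ?_, ?_⟩
  · rintro ⟨x, y⟩ hx
    simp only [Set.mem_setOf_eq] at hx ⊢
    linear_combination 5 * hx
  · rintro ⟨x, y⟩ _ ⟨x', y'⟩ _ h
    simp only [Prod.mk.injEq] at h
    obtain ⟨h1, h2⟩ := h
    have : x = x' := by linarith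
    have : y = y' := by linarith
    simp_all
  · rintro ⟨u, v⟩ hq
    simp only [Set.mem_setOf_eq] at hq
    have hk : 2 * u + 4 * v - 4 = 5 * ((n : ℤ) - u ^ 2 - v ^ 2) := by ring_nf; linarith
    obtain ⟨a, ha⟩ : (5 : ℤ) ∣ (-2 * u + v - 1) := by omega
    obtain ⟨b, hb⟩ : (5 : ℤ) ∣ (-u - 2 * v - 3) := by omega
    refine ⟨(a, b), ?_, ?_⟩
    · simp only [Set.mem_setOf_eq]
      have e1 : u = -2 * a - b - 1 := by omega
      have e2 : v = a - 2 * b - 1 := by omega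
      rw [e1, e2] at hq
      have h5 : 5 * (5 * a ^ 2 + 5 * b ^ 2 + 2 * a + 4 * b) = 5 * (n : ℤ) := by
        linear_combination hq
      linarith
    · have e1 : u = -2 * a - b - 1 := by omega
      have e2 : v = a - 2 * b - 1 := by omega
      simp [Prod.ext_iff]
      constructor <;> omega
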